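/- Let G be a finite simple graph with vertex set V(G) = {v_1, …, v_n} and let 1 < k < n. Suppose that: (1) N[v_1] ∪ … ∪ N[v_k] = V(G); (2) N[v_1] ∩ (N[v_2] ∪ … ∪ N[v_k]) = ∅; (3) |d(v_i) − d(v_j)| ≠ 1 for every i ∈ {1,…,k} and every j ∈ {1,…,n} with j ≠ i; (4) v_1 is the unique vertex of G of degree d(v_1); (5) for every i ∈ {2,…,k}, every vertex of G having degree d(v_i) lies in {v_2,…,v_k}. Let G' be a finite simple graph with vertex set V(G') = {v'_1, …, v'_n} such that for every j ∈ {1,…,n} the vertex-deleted subgraph G − v_j is isomorphic to G' − v'_j. Then every isomorphism f_1 : G − v_1 → G' − v'_1 maps the open neighborhood N(v_1) of v_1 in G onto the open neighborhood N(v'_1) of v'_1 in G'. -/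

import Mathlib

namespace Stmt7Aux

instance instDecMemComplSingleton {n : ℕ} (z : Fin n) :
    DecidablePred (· ∈ ({z}ᶜ : Set (Fin n))) :=
  fun y => inferInstanceAs (Decidable ¬(y = z))

instance instDecInduceAdj {n : ℕ} (s : Set (Fin n)) (G : SimpleGraph (Fin n))
    [DecidableRel G.Adj] : DecidableRel (G.induce s).Adj :=
  fun a b => inferInstanceAs (Decidable (G.Adj ↑a ↑b))

variable {n : ℕ}

lemma induce_adj_iff {s : Set (Fin n)} (G : SimpleGraph (Fin n)) (a b : s) :
    (G.induce s).Adj a b ↔ G.Adj ↑a ↑b := Iff.rfl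

lemma deg_del (G : SimpleGraph (Fin n)) [DecidableRel G.Adj] (z : Fin n)
    (x : ({z}ᶜ : Set (Fin n))) :
    (G.induce ({z}ᶜ : Set (Fin n))).degree x + (if G.Adj z ↑x then 1 else 0)
      = G.degree (x : Fin n) := by
  have e : ((G.induce ({z}ᶜ : Set (Fin n))).neighborSet x) ≃
      {y : Fin n // y ∈ ({z}ᶜ : Set (Fin n)) ∧ G.Adj ↑x y} :=
    { toFun := fun y => ⟨(y.1 : Fin n), y.1.2, by
        have h : (G.induce ({z}ᶜ : Set (Fin n))).Adj x y.1 := y.2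
        simpa using h⟩
      invFun := fun y => ⟨⟨y.1, y.2.1⟩, by
        show (G.induce ({z}ᶜ : Set (Fin n))).Adj x ⟨y.1, y.2.1⟩
        simpa using y.2.2⟩
      left_inv := fun y => rfl
      right_inv := fun y => rfl }
  have hfil : (Finset.univ.filter fun y => y ∈ ({z}ᶜ : Set (Fin n)) ∧ G.Adj ↑x y)
      = (G.neighborFinset ↑x).erase z := by
    ext y
    simp [SimpleGraph.mem_neighborFinset, and_comm]
  have hc : (G.induce ({z}ᶜ : Set (Fin n))).degree x
      = ((G.neighborFinset ↑x).erase z).card := by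
    rw [← SimpleGraph.card_neighborSet_eq_degree, Fintype.card_congr e,
      Fintype.card_subtype, hfil]
  rw [hc, ← SimpleGraph.card_neighborFinset_eq_degree]
  by_cases hz : G.Adj z ↑x
  · have hzmem : z ∈ G.neighborFinset ↑x := by
      rw [SimpleGraph.mem_neighborFinset]; exact hz.symm
    rw [Finset.card_erase_of_mem hzmem]
    have : 0 < (G.neighborFinset ↑x).card := Finset.card_pos.2 ⟨z, hzmem⟩
    simp only [hz, if_true]
    omega
  · have hnm : z ∉ G.neighborFinset ↑x := by
      rw [SimpleGraph.mem_neighborFinset]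
      exact fun h => hz h.symm
    rw [Finset.erase_eq_of_notMem hnm]
    simp only [hz, if_false, add_zero]

lemma iso_degree {V W : Type*} {G : SimpleGraph V} {H : SimpleGraph W} (f : G ≃g H) (v : V)
    [Fintype (G.neighborSet v)] [Fintype (H.neighborSet (f v))] :
    H.degree (f v) = G.degree v := by
  rw [← SimpleGraph.card_neighborSet_eq_degree, ← SimpleGraph.card_neighborSet_eq_degree]
  exact Fintype.card_congr (f.mapNeighborSet v).symm

lemma iso_edges {V W : Type*} [Fintype V] [Fintype W] {G : SimpleGraph V} {H : SimpleGraph W}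
    [Fintype G.edgeSet] [Fintype H.edgeSet] (f : G ≃g H) :
    H.edgeFinset.card = G.edgeFinset.card := by
  rw [SimpleGraph.edgeFinset_card, SimpleGraph.edgeFinset_card]
  exact Fintype.card_congr f.mapEdgeSet.symm

lemma sum_del (z : Fin n) (F : Fin n → ℕ) :
    (∑ x : ({z}ᶜ : Set (Fin n)), F ↑x) + F z = ∑ v, F v := by
  have h : ∀ x : Fin n, x ∈ Finset.univ.erase z ↔ x ∈ ({z}ᶜ : Set (Fin n)) := by
    intro x; simp [eq_comm]
  rw [← Finset.sum_subtype (Finset.univ.erase z) h F]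
  exact Finset.sum_erase_add _ _ (Finset.mem_univ z)

lemma sum_ite_deg (G : SimpleGraph (Fin n)) [DecidableRel G.Adj] (z : Fin n) :
    (∑ x : ({z}ᶜ : Set (Fin n)), (if G.Adj z ↑x then 1 else 0)) = G.degree z := by
  have h : ∀ x : Fin n, x ∈ Finset.univ.erase z ↔ x ∈ ({z}ᶜ : Set (Fin n)) := by
    intro x; simp [eq_comm]
  rw [← Finset.sum_subtype (Finset.univ.erase z) h (fun y => if G.Adj z y then 1 else 0)]
  rw [Finset.sum_erase _ (by simp)]
  rw [Finset.sum_boole]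
  simp [SimpleGraph.degree, SimpleGraph.neighborFinset_eq_filter]

lemma edge_del (G : SimpleGraph (Fin n)) [DecidableRel G.Adj] (z : Fin n) :
    2 * (G.induce ({z}ᶜ : Set (Fin n))).edgeFinset.card + 2 * G.degree z
      = 2 * G.edgeFinset.card := by
  have hsum := SimpleGraph.sum_degrees_eq_twice_card_edges (G.induce ({z}ᶜ : Set (Fin n)))
  have hsum' := SimpleGraph.sum_degrees_eq_twice_card_edges G
  have h1 : (∑ x : ({z}ᶜ : Set (Fin n)), G.degree (↑x : Fin n)) + G.degree z
      = 2 * G.edgeFinset.card := by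
    rw [sum_del z (fun v => G.degree v)]; exact hsum'
  have h2 : (∑ x : ({z}ᶜ : Set (Fin n)), G.degree (↑x : Fin n))
      = (∑ x : ({z}ᶜ : Set (Fin n)), (G.induce ({z}ᶜ : Set (Fin n))).degree x)
        + (∑ x : ({z}ᶜ : Set (Fin n)), (if G.Adj z ↑x then 1 else 0)) := by
    rw [← Finset.sum_add_distrib]
    exact (Finset.sum_congr rfl fun x _ => (deg_del G z x).symm)
  rw [sum_ite_deg] at h2
  omega

lemma deg_eq {G G' : SimpleGraph (Fin n)} [DecidableRel G.Adj] [DecidableRel G'.Adj]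
    (hn3 : 3 ≤ n)
    (hdel : ∀ j : Fin n,
      Nonempty (G.induce ({j}ᶜ : Set (Fin n)) ≃g G'.induce ({j}ᶜ : Set (Fin n)))) :
    ∀ x : Fin n, G'.degree x = G.degree x := by
  have key : ∀ z : Fin n, 2 * G'.edgeFinset.card + 2 * G.degree z
      = 2 * G.edgeFinset.card + 2 * G'.degree z := by
    intro z
    obtain ⟨g⟩ := hdel z
    have e1 := edge_del G z
    have e2 := edge_del G' z
    have e3 : (G'.induce ({z}ᶜ : Set (Fin n))).edgeFinset.card
        = (G.induce ({z}ᶜ : Set (Fin n))).edgeFinset.card := iso_edges g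
    omega
  have hsum : ∑ z : Fin n, (2 * G'.edgeFinset.card + 2 * G.degree z)
      = ∑ z : Fin n, (2 * G.edgeFinset.card + 2 * G'.degree z) :=
    Finset.sum_congr rfl fun z _ => key z
  rw [Finset.sum_add_distrib, Finset.sum_add_distrib, Finset.sum_const, Finset.sum_const,
    ← Finset.mul_sum, ← Finset.mul_sum, SimpleGraph.sum_degrees_eq_twice_card_edges,
    SimpleGraph.sum_degrees_eq_twice_card_edges, Finset.card_univ, Fintype.card_fin] at hsum
  have hee : G.edgeFinset.card = G'.edgeFinset.card := by
    set a := G.edgeFinset.card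
    set b := G'.edgeFinset.card
    have hz : ((n : ℤ) - 2) * ((b : ℤ) - (a : ℤ)) = 0 := by
      have : (n : ℤ) * (2 * b) + 2 * (2 * a) = (n : ℤ) * (2 * a) + 2 * (2 * b) := by
        exact_mod_cast hsum
      ring_nf
      ring_nf at this
      linarith
    rcases mul_eq_zero.1 hz with h | h
    · exfalso; have : (3 : ℤ) ≤ n := by exact_mod_cast hn3
      omega
    · have : (a : ℤ) = b := by omega
      exact_mod_cast this
  intro x
  have := key x
  omega

variable {k : ℕ}

/-- from h3 : no two degrees differing by one -/
lemma deg_gap {a b : ℕ} (h : |(a : ℤ) - (b : ℤ)| ≠ 1) : a ≠ b + 1 ∧ b ≠ a + 1 := by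
  constructor
  · intro hab
    apply h
    subst hab
    push_cast
    ring_nf
    simp
  · intro hab
    apply h
    subst hab
    push_cast
    ring_nf
    simp

lemma deg_close {G G' : SimpleGraph (Fin n)} [DecidableRel G.Adj] [DecidableRel G'.Adj]
    (hdeg : ∀ x, G'.degree x = G.degree x) (z : Fin n)
    (g : G.induce ({z}ᶜ : Set (Fin n)) ≃g G'.induce ({z}ᶜ : Set (Fin n)))
    (x : ({z}ᶜ : Set (Fin n))) :
    G.degree ↑x ≤ G.degree (↑(g x) : Fin n) + 1 ∧
      G.degree (↑(g x) : Fin n) ≤ G.degree ↑x + 1 := by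
  have a1 := deg_del G z x
  have a2 := deg_del G' z (g x)
  rw [hdeg] at a2
  have a3 : (G'.induce ({z}ᶜ : Set (Fin n))).degree (g x)
      = (G.induce ({z}ᶜ : Set (Fin n))).degree x := iso_degree g x
  rw [a3] at a2
  split_ifs at a1 a2 <;> omega


lemma fix_v1 {G G' : SimpleGraph (Fin n)} [DecidableRel G.Adj] [DecidableRel G'.Adj]
    (hdeg : ∀ x, G'.degree x = G.degree x) (v1 : Fin n)
    (h3 : ∀ i j : Fin n, (i : ℕ) < k → j ≠ i →
        |(G.degree i : ℤ) - (G.degree j : ℤ)| ≠ 1)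
    (h4 : ∀ w : Fin n, G.degree w = G.degree v1 → w = v1)
    (hv1k : (v1 : ℕ) < k) (z : Fin n)
    (g : G.induce ({z}ᶜ : Set (Fin n)) ≃g G'.induce ({z}ᶜ : Set (Fin n)))
    (x : ({z}ᶜ : Set (Fin n))) (hx : (x : Fin n) = v1) :
    (↑(g x) : Fin n) = v1 := by
  by_contra hy
  have hcl := deg_close hdeg z g x
  rw [hx] at hcl
  have hgap := deg_gap (h3 v1 ↑(g x) hv1k hy)
  have hne : G.degree (↑(g x) : Fin n) ≠ G.degree v1 := fun h => hy (h4 _ h)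
  omega

lemma mem_K {G G' : SimpleGraph (Fin n)} [DecidableRel G.Adj] [DecidableRel G'.Adj]
    (hdeg : ∀ x, G'.degree x = G.degree x)
    (h3 : ∀ i j : Fin n, (i : ℕ) < k → j ≠ i →
        |(G.degree i : ℤ) - (G.degree j : ℤ)| ≠ 1)
    (h5 : ∀ i : Fin n, 0 < (i : ℕ) → (i : ℕ) < k →
        ∀ w : Fin n, G.degree w = G.degree i → 0 < (w : ℕ) ∧ (w : ℕ) < k)
    (z : Fin n)
    (g : G.induce ({z}ᶜ : Set (Fin n)) ≃g G'.induce ({z}ᶜ : Set (Fin n)))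
    (x : ({z}ᶜ : Set (Fin n))) :
    (0 < ((x : Fin n) : ℕ) ∧ ((x : Fin n) : ℕ) < k) ↔
      (0 < ((↑(g x) : Fin n) : ℕ) ∧ ((↑(g x) : Fin n) : ℕ) < k) := by
  have hcl := deg_close hdeg z g x
  constructor
  · intro hx
    by_cases he : (↑(g x) : Fin n) = ↑x
    · rw [he]; exact hx
    · have hgap := deg_gap (h3 ↑x ↑(g x) hx.2 he)
      have hEq : G.degree (↑(g x) : Fin n) = G.degree (↑x : Fin n) := by omega
      exact h5 ↑x hx.1 hx.2 _ hEq
  · intro hx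
    by_cases he : ((x : Fin n)) = ↑(g x)
    · rw [he]; exact hx
    · have hgap := deg_gap (h3 ↑(g x) ↑x hx.2 he)
      have hEq : G.degree (↑x : Fin n) = G.degree (↑(g x) : Fin n) := by omega
      exact h5 ↑(g x) hx.1 hx.2 _ hEq

lemma adj_v1 {G G' : SimpleGraph (Fin n)} [DecidableRel G.Adj] [DecidableRel G'.Adj]
    (hdeg : ∀ x, G'.degree x = G.degree x) (v1 : Fin n)
    (h3 : ∀ i j : Fin n, (i : ℕ) < k → j ≠ i →
        |(G.degree i : ℤ) - (G.degree j : ℤ)| ≠ 1)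
    (h4 : ∀ w : Fin n, G.degree w = G.degree v1 → w = v1)
    (hv1k : (v1 : ℕ) < k) (z : Fin n) (hz : z ≠ v1)
    (g : G.induce ({z}ᶜ : Set (Fin n)) ≃g G'.induce ({z}ᶜ : Set (Fin n)))
    (x : ({z}ᶜ : Set (Fin n))) :
    G.Adj v1 ↑x ↔ G'.Adj v1 ↑(g x) := by
  have hmem : v1 ∈ ({z}ᶜ : Set (Fin n)) := by simpa using (Ne.symm hz)
  set V1 : ({z}ᶜ : Set (Fin n)) := ⟨v1, hmem⟩ with hV1
  have hgV1 : (↑(g V1) : Fin n) = v1 := fix_v1 hdeg v1 h3 h4 hv1k z g V1 rfl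
  constructor
  · intro h
    have h' : (G.induce ({z}ᶜ : Set (Fin n))).Adj V1 x := h
    have h'' : (G'.induce ({z}ᶜ : Set (Fin n))).Adj (g V1) (g x) := g.map_adj_iff.2 h'
    have h3' : G'.Adj ↑(g V1) ↑(g x) := h''
    rwa [hgV1] at h3'
  · intro h
    have h'' : (G'.induce ({z}ᶜ : Set (Fin n))).Adj (g V1) (g x) := by
      show G'.Adj ↑(g V1) ↑(g x)
      rw [hgV1]; exact h
    exact g.map_adj_iff.1 h''

end Stmt7Aux

open Stmt7Aux

/-- Under hypotheses (1)–(5) and the isomorphisms of vertex-deleted subgraphs,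
every isomorphism `f_1 : G − v_1 → G' − v'_1` maps the open
neighborhood `N(v_1)` of `v_1` in `G` onto `N(v'_1)` in `G'`. Vertices are indexed by `Fin n`, with `v_j` (resp. `v'_j`)
corresponding to index `⟨j-1, _⟩`; in particular `v_1` is `⟨0, _⟩`. -/
theorem stmt_7 (n k : ℕ) (hk1 : 1 < k) (hkn : k < n)
    (G G' : SimpleGraph (Fin n)) [DecidableRel G.Adj] [DecidableRel G'.Adj]
    -- (1) N[v_1] ∪ … ∪ N[v_k] = V(G)
    (h1 : (⋃ i ∈ {i : Fin n | (i : ℕ) < k},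
        insert i (G.neighborSet i)) = Set.univ)
    -- (2) N[v_1] ∩ (N[v_2] ∪ … ∪ N[v_k]) = ∅
    (h2 : insert (⟨0, by omega⟩ : Fin n) (G.neighborSet ⟨0, by omega⟩) ∩
        (⋃ i ∈ {i : Fin n | 0 < (i : ℕ) ∧ (i : ℕ) < k},
          insert i (G.neighborSet i)) = ∅)
    -- (3) |d(v_i) − d(v_j)| ≠ 1 for i ∈ {1,…,k}, j ≠ i
    (h3 : ∀ i j : Fin n, (i : ℕ) < k → j ≠ i →
        |(G.degree i : ℤ) - (G.degree j : ℤ)| ≠ 1)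
    -- (4) v_1 is the unique vertex of degree d(v_1)
    (h4 : ∀ w : Fin n, G.degree w = G.degree ⟨0, by omega⟩ → w = ⟨0, by omega⟩)
    -- (5) every vertex of degree d(v_i), i ∈ {2,…,k}, lies in {v_2,…,v_k}
    (h5 : ∀ i : Fin n, 0 < (i : ℕ) → (i : ℕ) < k →
        ∀ w : Fin n, G.degree w = G.degree i → 0 < (w : ℕ) ∧ (w : ℕ) < k)
    -- G − v_j ≅ G' − v'_j for every j
    (hdel : ∀ j : Fin n,
        Nonempty (G.induce ({j}ᶜ : Set (Fin n)) ≃g G'.induce ({j}ᶜ : Set (Fin n)))) :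
    ∀ f1 : G.induce ({(⟨0, by omega⟩ : Fin n)}ᶜ : Set (Fin n)) ≃g
           G'.induce ({(⟨0, by omega⟩ : Fin n)}ᶜ : Set (Fin n)),
      (fun x : ({(⟨0, by omega⟩ : Fin n)}ᶜ : Set (Fin n)) => ((f1 x : Fin n))) ''
          {x | (x : Fin n) ∈ G.neighborSet ⟨0, by omega⟩} =
        G'.neighborSet (⟨0, by omega⟩ : Fin n) := by
  intro f1
  have hn0 : 0 < n := by omega
  have hn3 : 3 ≤ n := by omega
  let v1 : Fin n := ⟨0, hn0⟩
  have hv1val : (v1 : ℕ) = 0 := rfl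
  have hdeg : ∀ x : Fin n, G'.degree x = G.degree x := deg_eq hn3 hdel
  have hv1k : ((v1 : Fin n) : ℕ) < k := by omega
  -- main inclusion
  have incl : ∀ x : ({v1}ᶜ : Set (Fin n)), G.Adj v1 ↑x → G'.Adj v1 ↑(f1 x) := by
    intro u hu
    by_contra hn'
    have huK : ¬(0 < ((u : Fin n) : ℕ) ∧ ((u : Fin n) : ℕ) < k) := by
      rintro ⟨h0, hk'⟩
      have hmem : (↑u : Fin n) ∈ (insert v1 (G.neighborSet v1) ∩
          (⋃ i ∈ {i : Fin n | 0 < (i : ℕ) ∧ (i : ℕ) < k},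
            insert i (G.neighborSet i))) :=
        ⟨Set.mem_insert_iff.2 (Or.inr hu),
          Set.mem_biUnion (show (↑u : Fin n) ∈ {i : Fin n | 0 < (i:ℕ) ∧ (i:ℕ) < k} from ⟨h0, hk'⟩)
            (Set.mem_insert _ _)⟩
      rw [h2] at hmem
      exact hmem
    have hfK : ¬(0 < ((↑(f1 u) : Fin n) : ℕ) ∧ ((↑(f1 u) : Fin n) : ℕ) < k) :=
      fun h => huK ((mem_K hdeg h3 h5 v1 f1 u).2 h)
    -- degree drop
    have hdrop : G.degree (↑(f1 u) : Fin n) + 1 = G.degree (↑u : Fin n) := by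
      have a1 := deg_del G v1 u
      have a2 := deg_del G' v1 (f1 u)
      rw [hdeg] at a2
      rw [iso_degree f1 u] at a2
      rw [if_pos hu] at a1
      rw [if_neg hn'] at a2
      have a3 : (G.induce ({v1}ᶜ : Set (Fin n))).degree u
          = (G.induce ({(⟨0, by omega⟩ : Fin n)}ᶜ : Set (Fin n))).degree u := rfl
      omega
    have hne_u : (↑(f1 u) : Fin n) ≠ ↑u := by
      intro he; rw [he] at hdrop; omega
    have hune : (↑u : Fin n) ≠ v1 := by
      intro he; rw [he] at hu; exact G.loopless.irrefl _ hu
    obtain ⟨g⟩ := hdel ↑u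
    have hy1 : (↑(f1 u) : Fin n) ≠ v1 := (f1 u).2
    have hy_mem : (↑(f1 u) : Fin n) ∈ ({(↑u : Fin n)}ᶜ : Set (Fin n)) := hne_u
    set Y : ({(↑u : Fin n)}ᶜ : Set (Fin n)) := ⟨↑(f1 u), hy_mem⟩ with hYdef
    set X := g.symm Y with hXdef
    have hgX : g X = Y := g.apply_symm_apply Y
    have hX1 : (↑X : Fin n) ≠ v1 := by
      intro he
      have hfix := fix_v1 hdeg v1 h3 h4 hv1k (↑u) g X he
      rw [hgX] at hfix
      exact hy1 hfix
    have hXadj : ¬ G.Adj v1 ↑X := by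
      intro ha
      have h' := (adj_v1 hdeg v1 h3 h4 hv1k (↑u) hune g X).1 ha
      rw [hgX] at h'
      exact hn' h'
    have hXK : ¬(0 < ((↑X : Fin n) : ℕ) ∧ ((↑X : Fin n) : ℕ) < k) := by
      intro h
      have h' := (mem_K hdeg h3 h5 (↑u) g X).1 h
      rw [hgX] at h'
      exact hfK h'
    have hcov : (↑X : Fin n) ∈ (⋃ i ∈ {i : Fin n | (i : ℕ) < k},
        insert i (G.neighborSet i)) := by rw [h1]; trivial
    rw [Set.mem_iUnion₂] at hcov
    obtain ⟨i, hik, hmem⟩ := hcov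
    rcases Set.mem_insert_iff.1 hmem with heq | hadj
    · apply hXK
      refine ⟨?_, by rw [heq]; exact hik⟩
      by_contra h0
      push_neg at h0
      exact hX1 (Fin.ext (by omega))
    · have hadjiX : G.Adj i ↑X := hadj
      have hiv1 : i ≠ v1 := by rintro rfl; exact hXadj hadjiX
      have hi0 : 0 < (i : ℕ) := by
        by_contra h0
        push_neg at h0
        exact hiv1 (Fin.ext (by omega))
      have hiu : i ≠ ↑u := by rintro rfl; exact huK ⟨hi0, hik⟩
      set I : ({(↑u : Fin n)}ᶜ : Set (Fin n)) := ⟨i, hiu⟩ with hIdef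
      have hadjXI : (G.induce ({(↑u : Fin n)}ᶜ : Set (Fin n))).Adj I X := hadjiX
      have hadj' : G'.Adj (↑(g I) : Fin n) (↑(f1 u) : Fin n) := by
        have h'' := g.map_adj_iff.2 hadjXI
        have h3' : G'.Adj ↑(g I) ↑(g X) := h''
        rwa [hgX] at h3'
      have hgIK : 0 < ((↑(g I) : Fin n) : ℕ) ∧ ((↑(g I) : Fin n) : ℕ) < k :=
        (mem_K hdeg h3 h5 (↑u) g I).1 ⟨hi0, hik⟩
      have hwv1 : (↑(g I) : Fin n) ≠ v1 := by
        intro he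
        have h0' := hgIK.1
        rw [he] at h0'
        omega
      set W : ({v1}ᶜ : Set (Fin n)) := ⟨↑(g I), hwv1⟩ with hWdef
      set W0 := f1.symm W with hW0def
      have hfW0 : f1 W0 = W := f1.apply_symm_apply W
      have hadjW : (G'.induce ({v1}ᶜ : Set (Fin n))).Adj (f1 W0) (f1 u) := by
        show G'.Adj ↑(f1 W0) ↑(f1 u)
        rw [hfW0]
        exact hadj'
      have hadjW0u : G.Adj (↑W0 : Fin n) ↑u := f1.map_adj_iff.1 hadjW
      have hW0K : 0 < ((↑W0 : Fin n) : ℕ) ∧ ((↑W0 : Fin n) : ℕ) < k := by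
        apply (mem_K hdeg h3 h5 v1 f1 W0).2
        rw [hfW0]
        exact hgIK
      have hbad : (↑u : Fin n) ∈ (insert v1 (G.neighborSet v1) ∩
          (⋃ i ∈ {i : Fin n | 0 < (i : ℕ) ∧ (i : ℕ) < k},
            insert i (G.neighborSet i))) :=
        ⟨Set.mem_insert_iff.2 (Or.inr hu),
          Set.mem_biUnion (show (↑W0 : Fin n) ∈ {i : Fin n | 0 < (i:ℕ) ∧ (i:ℕ) < k} from hW0K)
            (Set.mem_insert_iff.2 (Or.inr hadjW0u))⟩
      rw [h2] at hbad
      exact hbad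
  -- conclude by cardinality
  have hsub : (fun x : ({v1}ᶜ : Set (Fin n)) => ((f1 x : Fin n))) ''
      {x | (x : Fin n) ∈ G.neighborSet v1} ⊆ G'.neighborSet v1 := by
    rintro _ ⟨x, hx, rfl⟩
    exact incl x hx
  have hinj : Function.Injective (fun x : ({v1}ᶜ : Set (Fin n)) => ((f1 x : Fin n))) :=
    fun a b h => f1.toEquiv.injective (Subtype.val_injective h)
  have him : (Subtype.val '' {x : ({v1}ᶜ : Set (Fin n)) | (x : Fin n) ∈ G.neighborSet v1})
      = G.neighborSet v1 := by
    ext w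
    constructor
    · rintro ⟨x, hx, rfl⟩; exact hx
    · intro hw
      have hwv1 : w ≠ v1 := by
        intro he; rw [he] at hw; exact G.loopless.irrefl _ hw
      exact ⟨⟨w, hwv1⟩, hw, rfl⟩
  have h_src : ({x : ({v1}ᶜ : Set (Fin n)) | (x : Fin n) ∈ G.neighborSet v1}).ncard
      = (G.neighborSet v1).ncard := by
    have := Set.ncard_image_of_injective
      {x : ({v1}ᶜ : Set (Fin n)) | (x : Fin n) ∈ G.neighborSet v1} Subtype.val_injective
    rw [him] at this
    exact this.symm
  have h_img : ((fun x : ({v1}ᶜ : Set (Fin n)) => ((f1 x : Fin n))) ''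
      {x | (x : Fin n) ∈ G.neighborSet v1}).ncard
      = ({x : ({v1}ᶜ : Set (Fin n)) | (x : Fin n) ∈ G.neighborSet v1}).ncard :=
    Set.ncard_image_of_injective _ hinj
  have hA : (G.neighborSet v1).ncard = G.degree v1 := by
    rw [Set.ncard_eq_toFinset_card', Set.toFinset_card,
      SimpleGraph.card_neighborSet_eq_degree]
  have hB : (G'.neighborSet v1).ncard = G'.degree v1 := by
    rw [Set.ncard_eq_toFinset_card', Set.toFinset_card,
      SimpleGraph.card_neighborSet_eq_degree]
  have hle : (G'.neighborSet v1).ncard ≤ ((fun x : ({v1}ᶜ : Set (Fin n)) => ((f1 x : Fin n))) ''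
      {x | (x : Fin n) ∈ G.neighborSet v1}).ncard := by
    rw [h_img, h_src, hA, hB, hdeg]
  exact Set.eq_of_subset_of_ncard_le hsub hle (Set.toFinite _)
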